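/- arXiv:1902.10087 — 4 statements merged into one kernel-verified Lean document; each statement's English description precedes it below -/
import Mathlib

section
/- Let H be a finite-dimensional complex Hilbert space, let Θ_1,...,Θ_m be Hermitian operators on H and θ_1,...,θ_m real numbers. Suppose λ_1,...,λ_m are real numbers such that the density operator ρ* := exp(Σ_i λ_i Θ_i)/Tr[exp(Σ_i λ_i Θ_i)] satisfies Tr[ρ* Θ_i] = θ_i for all i. Then every density operator ρ on H satisfying Tr[ρ Θ_i] = θ_i for all i has S(ρ) ≤ S(ρ*), with equality if and only if ρ = ρ*. -/
open scoped Matrix ComplexOrder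

variable {A B C : Type*}

/-- Functional calculus for Hermitian matrices: apply `f : ℝ → ℝ` to the eigenvalues. -/
noncomputable def matFun {n : Type*} [Fintype n] [DecidableEq n]
    (f : ℝ → ℝ) (ρ : Matrix n n ℂ) : Matrix n n ℂ :=
  if h : ρ.IsHermitian then
    (h.eigenvectorUnitary : Matrix n n ℂ) *
      Matrix.diagonal (fun i => (f (h.eigenvalues i) : ℂ)) *
        (star (h.eigenvectorUnitary : Matrix n n ℂ))
  else 0

/-- Matrix logarithm via functional calculus. -/
noncomputable def matLog {n : Type*} [Fintype n] [DecidableEq n] (ρ : Matrix n n ℂ) :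
    Matrix n n ℂ := matFun Real.log ρ

/-- Matrix square root via functional calculus. -/
noncomputable def matSqrt {n : Type*} [Fintype n] [DecidableEq n] (ρ : Matrix n n ℂ) :
    Matrix n n ℂ := matFun Real.sqrt ρ

/-- Matrix inverse square root via functional calculus. -/
noncomputable def matInvSqrt {n : Type*} [Fintype n] [DecidableEq n] (ρ : Matrix n n ℂ) :
    Matrix n n ℂ := matFun (fun x => (Real.sqrt x)⁻¹) ρ

/-- A density operator: positive semidefinite with trace one. -/
def IsDensity {n : Type*} [Fintype n] (ρ : Matrix n n ℂ) : Prop :=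
  ρ.PosSemidef ∧ ρ.trace = 1

/-- The von Neumann entropy `S(ρ) = -Tr(ρ log ρ)`, computed via eigenvalues. -/
noncomputable def vnEntropy {n : Type*} [Fintype n] [DecidableEq n] (ρ : Matrix n n ℂ) : ℝ :=
  if h : ρ.IsHermitian then -∑ i, h.eigenvalues i * Real.log (h.eigenvalues i) else 0

/-- The quantum relative entropy `S(ρ‖σ) = Tr[ρ (log ρ - log σ)]`. -/
noncomputable def relEntropy {n : Type*} [Fintype n] [DecidableEq n]
    (ρ σ : Matrix n n ℂ) : ℝ := ((ρ * (matLog ρ - matLog σ)).trace).re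

section Tripartite

variable [Fintype A] [Fintype B] [Fintype C]

/-- Partial trace over the third factor. -/
noncomputable def ptC (ρ : Matrix (A × B × C) (A × B × C) ℂ) : Matrix (A × B) (A × B) ℂ :=
  fun x y => ∑ c : C, ρ (x.1, x.2, c) (y.1, y.2, c)

/-- Partial trace over the first factor. -/
noncomputable def ptA (ρ : Matrix (A × B × C) (A × B × C) ℂ) : Matrix (B × C) (B × C) ℂ :=
  fun x y => ∑ a : A, ρ (a, x) (a, y)

/-- Partial trace over the first and third factors. -/
noncomputable def ptAC (ρ : Matrix (A × B × C) (A × B × C) ℂ) : Matrix B B ℂ :=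
  fun b b' => ∑ a : A, ∑ c : C, ρ (a, b, c) (a, b', c)

/-- Partial trace over the first and second factors. -/
noncomputable def ptAB (ρ : Matrix (A × B × C) (A × B × C) ℂ) : Matrix C C ℂ :=
  fun c c' => ∑ a : A, ∑ b : B, ρ (a, b, c) (a, b, c')

/-- Partial trace over the second and third factors. -/
noncomputable def ptBC (ρ : Matrix (A × B × C) (A × B × C) ℂ) : Matrix A A ℂ :=
  fun a a' => ∑ b : B, ∑ c : C, ρ (a, b, c) (a', b, c)

/-- Partial trace of a bipartite state over its first factor. -/
noncomputable def bptFst {X Y : Type*} [Fintype X] [Fintype Y]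
    (M : Matrix (X × Y) (X × Y) ℂ) : Matrix Y Y ℂ :=
  fun b b' => ∑ x : X, M (x, b) (x, b')

/-- Partial trace of a bipartite state over its second factor. -/
noncomputable def bptSnd {X Y : Type*} [Fintype X] [Fintype Y]
    (M : Matrix (X × Y) (X × Y) ℂ) : Matrix X X ℂ :=
  fun a a' => ∑ y : Y, M (a, y) (a', y)

variable [DecidableEq A] [DecidableEq B] [DecidableEq C]

/-- Extend an operator on the first two factors to the tripartite space: `M ⊗ id_C`. -/
noncomputable def extAB (M : Matrix (A × B) (A × B) ℂ) :
    Matrix (A × B × C) (A × B × C) ℂ :=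
  fun x y => M (x.1, x.2.1) (y.1, y.2.1) * (if x.2.2 = y.2.2 then 1 else 0)

/-- Extend an operator on the last two factors to the tripartite space: `id_A ⊗ M`. -/
noncomputable def extBC (M : Matrix (B × C) (B × C) ℂ) :
    Matrix (A × B × C) (A × B × C) ℂ :=
  fun x y => (if x.1 = y.1 then 1 else 0) * M x.2 y.2

/-- Extend an operator on the middle factor to the tripartite space: `id_A ⊗ M ⊗ id_C`. -/
noncomputable def extB (M : Matrix B B ℂ) : Matrix (A × B × C) (A × B × C) ℂ :=
  fun x y => (if x.1 = y.1 then 1 else 0) * M x.2.1 y.2.1 * (if x.2.2 = y.2.2 then 1 else 0)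

/-- Quantum conditional mutual information `I_ρ(A:C|B)`. -/
noncomputable def qcmi (ρ : Matrix (A × B × C) (A × B × C) ℂ) : ℝ :=
  vnEntropy (ptC ρ) + vnEntropy (ptA ρ) - vnEntropy (ptAC ρ) - vnEntropy ρ

end Tripartite


section MaxEntAux
namespace MaxEntAux
open Polynomial Matrix Finset

variable {n : Type*} [Fintype n] [DecidableEq n]

lemma charpoly_unitary_conj (U A : Matrix n n ℂ)
    (h1 : U * star U = 1) : (U * A * star U).charpoly = A.charpoly := by
  have hcm : charmatrix (U * A * star U) =
      U.map Polynomial.C * charmatrix A * (star U).map Polynomial.C := by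
    simp only [charmatrix, RingHom.mapMatrix_apply]
    conv_rhs => rw [mul_sub, sub_mul]
    congr 1
    · have hc : Commute (Matrix.scalar n (Polynomial.X : ℂ[X])) ((star U).map Polynomial.C) :=
        scalar_commute (Polynomial.X : ℂ[X]) (fun r' => mul_comm _ _) _
      rw [mul_assoc, hc.eq, ← mul_assoc, ← Matrix.map_mul, h1]
      simp
    · rw [Matrix.map_mul, Matrix.map_mul]
  rw [Matrix.charpoly, Matrix.charpoly, hcm, det_mul, det_mul]
  rw [← RingHom.mapMatrix_apply, ← RingHom.mapMatrix_apply, ← RingHom.map_det, ← RingHom.map_det]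
  have : Polynomial.C U.det * (charmatrix A).det * Polynomial.C (star U).det
      = (charmatrix A).det * Polynomial.C ((U * star U).det) := by rw [det_mul, _root_.map_mul]; ring
  rw [this, h1, det_one, _root_.map_one, mul_one]

lemma charpoly_diagonal' (d : n → ℂ) :
    (diagonal d).charpoly = ∏ i, (X - Polynomial.C (d i)) := by
  have : charmatrix (diagonal d) = diagonal fun i => X - Polynomial.C (d i) := by
    refine Matrix.ext fun i j => ?_
    by_cases h : i = j
    · subst h; simp [charmatrix_apply_eq, Matrix.diagonal_apply_eq]
    · rw [charmatrix_apply_ne _ _ _ h, diagonal_apply_ne _ h, diagonal_apply_ne _ h, map_zero,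
        neg_zero]
  rw [Matrix.charpoly, this, det_diagonal]

lemma eig_multiset {M : Matrix n n ℂ} (hM : M.IsHermitian) (U : Matrix n n ℂ)
    (h1 : U * star U = 1) (d : n → ℝ)
    (hMeq : M = U * diagonal (fun j => (d j : ℂ)) * star U) :
    Finset.univ.val.map hM.eigenvalues = Finset.univ.val.map d := by
  have hU1 : (hM.eigenvectorUnitary : Matrix n n ℂ) * star (hM.eigenvectorUnitary : Matrix n n ℂ) = 1 :=
    Matrix.mem_unitaryGroup_iff.mp (hM.eigenvectorUnitary).2
  have c1 : M.charpoly = ∏ i, (X - Polynomial.C ((hM.eigenvalues i : ℂ))) := by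
    conv_lhs => rw [hM.spectral_theorem, Unitary.conjStarAlgAut_apply]
    rw [charpoly_unitary_conj _ _ hU1, charpoly_diagonal']
    rfl
  have c2 : M.charpoly = ∏ i, (X - Polynomial.C ((d i : ℂ))) := by
    conv_lhs => rw [hMeq]
    rw [charpoly_unitary_conj _ _ h1, charpoly_diagonal']
  have hprod : (Finset.univ.val.map fun i => ((hM.eigenvalues i : ℂ)))
      = (Finset.univ.val.map fun i => ((d i : ℂ))) := by
    have := c1.symm.trans c2
    rw [Finset.prod_eq_multiset_prod, Finset.prod_eq_multiset_prod] at this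
    rw [← roots_multiset_prod_X_sub_C (Finset.univ.val.map fun i => ((hM.eigenvalues i : ℂ))),
      ← roots_multiset_prod_X_sub_C (Finset.univ.val.map fun i => ((d i : ℂ)))]
    rw [Multiset.map_map, Multiset.map_map]
    exact congrArg Polynomial.roots this
  have := Multiset.map_injective (f := (Complex.ofReal : ℝ → ℂ)) Complex.ofReal_injective
  apply this
  rw [Multiset.map_map, Multiset.map_map]
  exact hprod

lemma sum_f_eig {M : Matrix n n ℂ} (hM : M.IsHermitian) (U : Matrix n n ℂ)
    (h1 : U * star U = 1) (d : n → ℝ)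
    (hMeq : M = U * diagonal (fun j => (d j : ℂ)) * star U) (f : ℝ → ℝ) :
    ∑ i, f (hM.eigenvalues i) = ∑ i, f (d i) := by
  have h := eig_multiset hM U h1 d hMeq
  rw [Finset.sum_eq_multiset_sum, Finset.sum_eq_multiset_sum]
  rw [show (Finset.univ.val.map fun i => f (hM.eigenvalues i))
      = (Finset.univ.val.map hM.eigenvalues).map f from (Multiset.map_map f _ _).symm,
    show (Finset.univ.val.map fun i => f (d i))
      = (Finset.univ.val.map d).map f from (Multiset.map_map f _ _).symm, h]

lemma core_ineq {n : Type*} [Fintype n] (p q : n → ℝ) (T : n → n → ℝ)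
    (hp : ∀ k, 0 ≤ p k) (hq : ∀ j, 0 < q j) (hT : ∀ j k, 0 ≤ T j k)
    (hrow : ∀ j, ∑ k, T j k = 1) (hcol : ∀ k, ∑ j, T j k = 1)
    (hsp : ∑ k, p k = 1) (hsq : ∑ j, q j = 1)
    (hconstr : ∑ j, ∑ k, T j k * (p k * Real.log (q j)) = ∑ j, q j * Real.log (q j)) :
    (-∑ k, p k * Real.log (p k) ≤ -∑ j, q j * Real.log (q j)) ∧
      ((-∑ k, p k * Real.log (p k) = -∑ j, q j * Real.log (q j)) →
        ∀ j k, T j k ≠ 0 → p k = q j) := by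
  set F : n → n → ℝ := fun j k => T j k * (p k * (Real.log (q j) - Real.log (p k))) with hF
  set G : n → n → ℝ := fun j k => T j k * (q j - p k) with hG
  have hFG : ∀ j k, F j k ≤ G j k := by
    intro j k
    by_cases hpk : p k = 0
    · simp only [hF, hG, hpk, zero_mul, mul_zero, sub_zero]
      exact mul_nonneg (hT j k) (le_of_lt (hq j))
    · have hpk' : 0 < p k := lt_of_le_of_ne (hp k) (Ne.symm hpk)
      have hlog : Real.log (q j) - Real.log (p k) = Real.log (q j / p k) :=
        (Real.log_div (ne_of_gt (hq j)) hpk).symm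
      have hle : Real.log (q j / p k) ≤ q j / p k - 1 :=
        Real.log_le_sub_one_of_pos (div_pos (hq j) hpk')
      have h2 : p k * (Real.log (q j) - Real.log (p k)) ≤ q j - p k := by
        rw [hlog]
        have := mul_le_mul_of_nonneg_left hle (le_of_lt hpk')
        calc p k * Real.log (q j / p k) ≤ p k * (q j / p k - 1) := this
          _ = q j - p k := by field_simp
      exact mul_le_mul_of_nonneg_left h2 (hT j k)
  have hsumG : ∑ j, ∑ k, G j k = 0 := by
    have e1 : ∀ j, ∑ k, G j k = q j - ∑ k, T j k * p k := by
      intro j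
      simp only [hG, mul_sub]
      rw [Finset.sum_sub_distrib, ← Finset.sum_mul, hrow j, one_mul]
    simp only [e1]
    rw [Finset.sum_sub_distrib, hsq, Finset.sum_comm]
    have e2 : ∀ k, ∑ j, T j k * p k = p k := by
      intro k; rw [← Finset.sum_mul, hcol k, one_mul]
    simp only [e2, hsp, sub_self]
  have hsumF : ∑ j, ∑ k, F j k
      = (∑ j, q j * Real.log (q j)) - ∑ k, p k * Real.log (p k) := by
    have e1 : ∀ j k, F j k = T j k * (p k * Real.log (q j)) - T j k * (p k * Real.log (p k)) := by
      intro j k; simp only [hF]; ring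
    simp only [e1, Finset.sum_sub_distrib]
    have e2 : ∑ j, ∑ k, T j k * (p k * Real.log (p k)) = ∑ k, p k * Real.log (p k) := by
      rw [Finset.sum_comm]
      refine Finset.sum_congr rfl fun k _ => ?_
      rw [← Finset.sum_mul, hcol k, one_mul]
    rw [hconstr, e2]
  have hmain : ∑ j, ∑ k, F j k ≤ 0 := by
    calc ∑ j, ∑ k, F j k ≤ ∑ j, ∑ k, G j k :=
          Finset.sum_le_sum fun j _ => Finset.sum_le_sum fun k _ => hFG j k
      _ = 0 := hsumG
  constructor
  · linarith [hmain, hsumF]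
  · intro heq j k hTjk
    have hFeq : ∑ j, ∑ k, F j k = ∑ j, ∑ k, G j k := by
      rw [hsumG, hsumF]; linarith
    have hprod : ∑ x : n × n, F x.1 x.2 = ∑ x : n × n, G x.1 x.2 := by
      rw [Fintype.sum_prod_type, Fintype.sum_prod_type]; exact hFeq
    have hterm : ∀ x : n × n, x ∈ Finset.univ → F x.1 x.2 = G x.1 x.2 :=
      (Finset.sum_eq_sum_iff_of_le (fun x _ => hFG x.1 x.2)).mp hprod
    have hjk : F j k = G j k := hterm (j, k) (Finset.mem_univ _)
    have hT' : 0 < T j k := lt_of_le_of_ne (hT j k) (Ne.symm hTjk)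
    by_cases hpk : p k = 0
    · exfalso
      simp only [hF, hG, hpk, zero_mul, mul_zero, sub_zero] at hjk
      exact hTjk (by
        have : T j k * q j = 0 := hjk.symm
        rcases mul_eq_zero.mp this with h | h
        · exact h
        · exact absurd h (ne_of_gt (hq j)))
    · have hpk' : 0 < p k := lt_of_le_of_ne (hp k) (Ne.symm hpk)
      by_contra hne
      have hx1 : q j / p k ≠ 1 := by
        intro h
        exact hne ((div_eq_one_iff_eq (ne_of_gt hpk')).mp h).symm
      have hlt : Real.log (q j / p k) < q j / p k - 1 :=
        Real.log_lt_sub_one_of_pos (div_pos (hq j) hpk') hx1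
      have hcanc : p k * (Real.log (q j) - Real.log (p k)) = q j - p k :=
        mul_left_cancel₀ hTjk (by simpa [hF, hG] using hjk)
      rw [(Real.log_div (ne_of_gt (hq j)) hpk).symm] at hcanc
      have := mul_lt_mul_of_pos_left hlt hpk'
      rw [hcanc] at this
      have h2 : p k * (q j / p k - 1) = q j - p k := by field_simp
      rw [h2] at this
      exact lt_irrefl _ this

lemma trace_WDW (W : Matrix n n ℂ) (p' e' : n → ℂ) :
    Matrix.trace (W * Matrix.diagonal p' * star W * Matrix.diagonal e')
      = ∑ j, ∑ k, W j k * p' k * star (W j k) * e' j := by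
  have hM : ∀ j, (W * Matrix.diagonal p' * star W) j j = ∑ k, W j k * p' k * star (W j k) := by
    intro j
    rw [Matrix.mul_apply]
    refine Finset.sum_congr rfl fun k _ => ?_
    rw [Matrix.mul_diagonal, Matrix.star_eq_conjTranspose, Matrix.conjTranspose_apply]
  rw [Matrix.trace_mul_comm]
  simp only [Matrix.trace, Matrix.diag, Matrix.diagonal_mul]
  refine Finset.sum_congr rfl fun j _ => ?_
  rw [hM, Finset.mul_sum]
  refine Finset.sum_congr rfl fun k _ => ?_
  ring

end MaxEntAux
end MaxEntAux

/-- Jaynes' maximum entropy principle: the Gibbs state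
`ρ* = exp(∑ᵢ λᵢ Θᵢ)/Tr[exp(∑ᵢ λᵢ Θᵢ)]` satisfying the expectation constraints
`Tr[ρ* Θᵢ] = θᵢ` is the unique maximizer of the von Neumann entropy among all density
operators satisfying the same constraints. -/
theorem maxEnt_gibbs_state {n : Type*} [Fintype n] [DecidableEq n] {m : ℕ}
    (Θ : Fin m → Matrix n n ℂ) (hΘ : ∀ i, (Θ i).IsHermitian)
    (θ lam : Fin m → ℝ)
    (ρstar : Matrix n n ℂ)
    (hρstar : ρstar = ((NormedSpace.exp (∑ i, (lam i : ℂ) • Θ i)).trace)⁻¹ •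
        NormedSpace.exp (∑ i, (lam i : ℂ) • Θ i))
    (hconstr : ∀ i, (ρstar * Θ i).trace = (θ i : ℂ)) :
    ∀ ρ : Matrix n n ℂ, IsDensity ρ → (∀ i, (ρ * Θ i).trace = (θ i : ℂ)) →
      vnEntropy ρ ≤ vnEntropy ρstar ∧ (vnEntropy ρ = vnEntropy ρstar ↔ ρ = ρstar) := by
  intro ρ hρ hρc
  rcases isEmpty_or_nonempty n with hn | hn
  · exfalso
    have h2 := hρ.2
    simp [Matrix.trace] at h2
  classical
  set H : Matrix n n ℂ := ∑ i, (lam i : ℂ) • Θ i with hHdef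
  have hH : H.IsHermitian := by
    show Hᴴ = H
    rw [hHdef, Matrix.conjTranspose_sum]
    refine Finset.sum_congr rfl fun i _ => ?_
    rw [Matrix.conjTranspose_smul, (hΘ i).eq]
    simp [Complex.star_def, Complex.conj_ofReal]
  set U0 : Matrix n n ℂ := (hH.eigenvectorUnitary : Matrix n n ℂ) with hU0
  set μ : n → ℝ := hH.eigenvalues with hμdef
  have hU1 : U0 * star U0 = 1 := Matrix.mem_unitaryGroup_iff.mp hH.eigenvectorUnitary.2
  have hU2 : star U0 * U0 = 1 := Matrix.mem_unitaryGroup_iff'.mp hH.eigenvectorUnitary.2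
  have hHeq : H = U0 * Matrix.diagonal (fun j => (μ j : ℂ)) * star U0 := by
    conv_lhs => rw [hH.spectral_theorem]
    rfl
  have hUunit : IsUnit U0 := ⟨⟨U0, star U0, hU1, hU2⟩, rfl⟩
  have hUinv : U0⁻¹ = star U0 := Matrix.inv_eq_right_inv hU1
  have hexp : NormedSpace.exp H
      = U0 * Matrix.diagonal (fun j => ((Real.exp (μ j) : ℝ) : ℂ)) * star U0 := by
    rw [hHeq, ← hUinv, Matrix.exp_conj U0 _ hUunit, Matrix.exp_diagonal, hUinv]
    congr 2
    funext j
    simp [Pi.exp_def, ← Complex.exp_eq_exp_ℂ, ← Complex.ofReal_exp]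
  -- partition function
  set Z : ℝ := ∑ j, Real.exp (μ j) with hZdef
  have hZpos : 0 < Z := Finset.sum_pos (fun j _ => Real.exp_pos _) Finset.univ_nonempty
  have htrexp : (NormedSpace.exp H).trace = (Z : ℂ) := by
    rw [hexp, Matrix.trace_mul_cycle, hU2, one_mul, Matrix.trace_diagonal, hZdef,
      Complex.ofReal_sum]
  set q : n → ℝ := fun j => Real.exp (μ j) / Z with hqdef
  have hqpos : ∀ j, 0 < q j := fun j => div_pos (Real.exp_pos _) hZpos
  have hsq : ∑ j, q j = 1 := by
    rw [hqdef]
    rw [← Finset.sum_div, ← hZdef, div_self (ne_of_gt hZpos)]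
  have hρs : ρstar = U0 * Matrix.diagonal (fun j => (q j : ℂ)) * star U0 := by
    have hdq : ((Z : ℂ))⁻¹ • Matrix.diagonal (fun j => ((Real.exp (μ j) : ℝ) : ℂ))
        = Matrix.diagonal (fun j => ((q j : ℝ) : ℂ)) := by
      rw [← Matrix.diagonal_smul]
      refine congrArg Matrix.diagonal (funext fun j => ?_)
      rw [Pi.smul_apply, smul_eq_mul, hqdef]
      push_cast
      ring
    rw [hρstar, htrexp, hexp, ← Matrix.smul_mul, ← Matrix.mul_smul, hdq]
  have hρsH : ρstar.IsHermitian := by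
    rw [hρs]
    show _ᴴ = _
    have hd : (Matrix.diagonal (fun j => (q j : ℂ)))ᴴ = Matrix.diagonal (fun j => (q j : ℂ)) := by
      rw [Matrix.diagonal_conjTranspose]
      refine congrArg Matrix.diagonal (funext fun j => ?_)
      rw [Pi.star_apply, Complex.star_def, Complex.conj_ofReal]
    rw [Matrix.star_eq_conjTranspose, Matrix.conjTranspose_mul, Matrix.conjTranspose_mul, hd,
      Matrix.conjTranspose_conjTranspose, Matrix.mul_assoc]
  have hSstar : vnEntropy ρstar = -∑ j, q j * Real.log (q j) := by
    rw [vnEntropy, dif_pos hρsH]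
    exact congrArg Neg.neg
      (MaxEntAux.sum_f_eig hρsH U0 hU1 q hρs (fun x => x * Real.log x))
  -- the state ρ
  have hρPSD := hρ.1
  have hρH : ρ.IsHermitian := hρPSD.1
  set V : Matrix n n ℂ := (hρH.eigenvectorUnitary : Matrix n n ℂ) with hVdef
  set p : n → ℝ := hρH.eigenvalues with hpdef
  have hV1 : V * star V = 1 := Matrix.mem_unitaryGroup_iff.mp hρH.eigenvectorUnitary.2
  have hV2 : star V * V = 1 := Matrix.mem_unitaryGroup_iff'.mp hρH.eigenvectorUnitary.2
  have hρeq : ρ = V * Matrix.diagonal (fun k => (p k : ℂ)) * star V := by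
    conv_lhs => rw [hρH.spectral_theorem]
    rfl
  have hppos : ∀ k, 0 ≤ p k := fun k => hρPSD.eigenvalues_nonneg k
  have htrρ : ∑ k, p k = 1 := by
    have h1 : ρ.trace = ((∑ k, p k : ℝ) : ℂ) := by
      rw [hρeq, Matrix.trace_mul_cycle, hV2, Matrix.one_mul, Matrix.trace_diagonal,
        Complex.ofReal_sum]
    have h2 := hρ.2
    rw [h1] at h2
    exact_mod_cast h2
  have hSρ : vnEntropy ρ = -∑ k, p k * Real.log (p k) := by
    rw [vnEntropy, dif_pos hρH]
  -- the unitary overlap matrix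
  set W : Matrix n n ℂ := star U0 * V with hWdef
  have hVW : U0 * W = V := by
    rw [hWdef, ← Matrix.mul_assoc, hU1, Matrix.one_mul]
  have hsW : star W = star V * U0 := by rw [hWdef, star_mul, star_star]
  have hW1 : W * star W = 1 := by
    rw [hWdef, hsW, Matrix.mul_assoc, ← Matrix.mul_assoc V (star V) U0, hV1,
      Matrix.one_mul, hU2]
  have hW2 : star W * W = 1 := by
    rw [hWdef, hsW, Matrix.mul_assoc, ← Matrix.mul_assoc U0 (star U0) V, hU1,
      Matrix.one_mul, hV2]
  set T : n → n → ℝ := fun j k => Complex.normSq (W j k) with hTdef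
  have hTnn : ∀ j k, 0 ≤ T j k := fun j k => Complex.normSq_nonneg _
  have hTrow : ∀ j, ∑ k, T j k = 1 := by
    intro j
    have h := congrArg (fun M : Matrix n n ℂ => M j j) hW1
    simp only [Matrix.mul_apply, Matrix.one_apply_eq, Matrix.star_eq_conjTranspose,
      Matrix.conjTranspose_apply, Complex.star_def, Complex.mul_conj] at h
    exact_mod_cast h
  have hTcol : ∀ k, ∑ j, T j k = 1 := by
    intro k
    have h := congrArg (fun M : Matrix n n ℂ => M k k) hW2
    simp only [Matrix.mul_apply, Matrix.one_apply_eq, Matrix.star_eq_conjTranspose,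
      Matrix.conjTranspose_apply, Complex.star_def] at h
    have h' : ∑ j, ((Complex.normSq (W j k) : ℝ) : ℂ) = 1 := by
      rw [← h]
      refine Finset.sum_congr rfl fun j _ => ?_
      rw [← Complex.normSq_eq_conj_mul_self]
    exact_mod_cast h'
  -- trace constraints
  have htrρH : (ρ * H).trace = ((∑ i, lam i * θ i : ℝ) : ℂ) := by
    rw [hHdef, Matrix.mul_sum, Matrix.trace_sum, Complex.ofReal_sum]
    refine Finset.sum_congr rfl fun i _ => ?_
    rw [Matrix.mul_smul, Matrix.trace_smul, hρc i, smul_eq_mul]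
    push_cast
    ring
  have htrρsH : (ρstar * H).trace = ((∑ i, lam i * θ i : ℝ) : ℂ) := by
    rw [hHdef, Matrix.mul_sum, Matrix.trace_sum, Complex.ofReal_sum]
    refine Finset.sum_congr rfl fun i _ => ?_
    rw [Matrix.mul_smul, Matrix.trace_smul, hconstr i, smul_eq_mul]
    push_cast
    ring
  -- trace formulas via W
  have key1 : ρ * H = U0 * (W * Matrix.diagonal (fun k => (p k : ℂ)) * star W *
      Matrix.diagonal (fun j => (μ j : ℂ))) * star U0 := by
    rw [hρeq, hHeq, ← hVW, star_mul]
    simp only [Matrix.mul_assoc]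
    rw [show star U0 * (U0 * (Matrix.diagonal (fun j => (μ j : ℂ)) * star U0))
        = Matrix.diagonal (fun j => (μ j : ℂ)) * star U0 from by
      rw [← Matrix.mul_assoc, hU2, Matrix.one_mul]]
  have hform1 : (ρ * H).trace = ((∑ j, ∑ k, T j k * (p k * μ j) : ℝ) : ℂ) := by
    rw [key1, Matrix.trace_mul_cycle, hU2, Matrix.one_mul, MaxEntAux.trace_WDW,
      Complex.ofReal_sum]
    refine Finset.sum_congr rfl fun j _ => ?_
    rw [Complex.ofReal_sum]
    refine Finset.sum_congr rfl fun k _ => ?_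
    have hns : ((T j k : ℝ) : ℂ) = W j k * star (W j k) := by
      rw [hTdef, Complex.star_def, Complex.mul_conj]
    push_cast
    rw [show ((Complex.normSq (W j k) : ℝ) : ℂ) = W j k * star (W j k) from hns]
    ring
  have key2 : ρstar * H = U0 * (Matrix.diagonal (fun j => (q j : ℂ)) *
      Matrix.diagonal (fun j => (μ j : ℂ))) * star U0 := by
    rw [hρs, hHeq]
    simp only [Matrix.mul_assoc]
    rw [show star U0 * (U0 * (Matrix.diagonal (fun j => (μ j : ℂ)) * star U0))
        = Matrix.diagonal (fun j => (μ j : ℂ)) * star U0 from by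
      rw [← Matrix.mul_assoc, hU2, Matrix.one_mul]]
  have hform2 : (ρstar * H).trace = ((∑ j, q j * μ j : ℝ) : ℂ) := by
    rw [key2, Matrix.trace_mul_cycle, hU2, Matrix.one_mul,
      Matrix.diagonal_mul_diagonal, Matrix.trace_diagonal, Complex.ofReal_sum]
    refine Finset.sum_congr rfl fun j _ => ?_
    push_cast
    ring
  have hreal : ∑ j, ∑ k, T j k * (p k * μ j) = ∑ j, q j * μ j := by
    have hc : ((∑ j, ∑ k, T j k * (p k * μ j) : ℝ) : ℂ) = ((∑ j, q j * μ j : ℝ) : ℂ) := by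
      rw [← hform1, ← hform2, htrρH, htrρsH]
    exact_mod_cast hc
  have hlogq : ∀ j, Real.log (q j) = μ j - Real.log Z := by
    intro j
    rw [hqdef]
    rw [Real.log_div (Real.exp_pos _).ne' (ne_of_gt hZpos), Real.log_exp]
  have hTp1 : ∑ j, ∑ k, T j k * p k = 1 := by
    rw [Finset.sum_comm]
    have e : ∀ k, ∑ j, T j k * p k = p k := fun k => by
      rw [← Finset.sum_mul, hTcol k, one_mul]
    simp only [e]
    exact htrρ
  have hcore_constr : ∑ j, ∑ k, T j k * (p k * Real.log (q j))
      = ∑ j, q j * Real.log (q j) := by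
    have l1 : ∀ j k, T j k * (p k * Real.log (q j))
        = T j k * (p k * μ j) - T j k * p k * Real.log Z := by
      intro j k; rw [hlogq j]; ring
    have r1 : ∀ j, q j * Real.log (q j) = q j * μ j - q j * Real.log Z := by
      intro j; rw [hlogq j]; ring
    simp only [l1, r1, Finset.sum_sub_distrib]
    rw [hreal]
    congr 1
    have l2 : ∑ j, ∑ k, T j k * p k * Real.log Z
        = (∑ j, ∑ k, T j k * p k) * Real.log Z := by
      rw [Finset.sum_mul]
      exact Finset.sum_congr rfl fun j _ => (Finset.sum_mul _ _ _).symm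
    rw [l2, hTp1, one_mul, ← Finset.sum_mul, hsq, one_mul]
  obtain ⟨hineq, heqcase⟩ := MaxEntAux.core_ineq p q T hppos hqpos hTnn hTrow hTcol
    htrρ hsq hcore_constr
  rw [hSρ, hSstar]
  refine ⟨hineq, ?_, ?_⟩
  · intro heqS
    have hpt := heqcase heqS
    have hdiag : Matrix.diagonal (fun k => (p k : ℂ)) * star W
        = star W * Matrix.diagonal (fun j => (q j : ℂ)) := by
      refine Matrix.ext fun k j => ?_
      rw [Matrix.diagonal_mul, Matrix.mul_diagonal]
      by_cases hw : W j k = 0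
      · simp [Matrix.star_eq_conjTranspose, Matrix.conjTranspose_apply, hw]
      · have hTne : T j k ≠ 0 := by
          simpa [hTdef, Complex.normSq_eq_zero] using hw
        rw [hpt j k hTne]
        exact mul_comm _ _
    have hWQW : W * Matrix.diagonal (fun k => (p k : ℂ)) * star W
        = Matrix.diagonal (fun j => (q j : ℂ)) := by
      rw [Matrix.mul_assoc, hdiag, ← Matrix.mul_assoc, hW1, Matrix.one_mul]
    rw [hρeq, hρs, ← hVW, star_mul]
    have h := congrArg (fun M => U0 * (M * star U0)) hWQW
    simpa only [Matrix.mul_assoc] using h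
  · intro h
    rw [← hSρ, ← hSstar, h]
end

section
/- Let ρ_AB be a density operator on H_A⊗H_B and ρ_BC a density operator on H_B⊗H_C such that ρ_B := Tr_A(ρ_AB) = Tr_C(ρ_BC) is invertible. Then the operator ϱ_ABC := ρ_BC^{1/2} ρ_B^{−1/2} ρ_AB ρ_B^{−1/2} ρ_BC^{1/2} (each factor extended to H_A⊗H_B⊗H_C by tensoring with identities) is positive semidefinite with trace 1 and satisfies Tr_A(ϱ_ABC) = ρ_BC. -/
open scoped Matrix ComplexOrder

variable {A B C : Type*}

section AuxFC
open Matrix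
variable {n : Type*} [Fintype n] [DecidableEq n] {ρ : Matrix n n ℂ}

lemma matFun_isHermitian (f : ℝ → ℝ) (ρ : Matrix n n ℂ) : (matFun f ρ).IsHermitian := by
  unfold matFun
  split_ifs with h
  · have : (Matrix.diagonal (fun i => ((f (h.eigenvalues i) : ℝ) : ℂ))).IsHermitian := by
      apply Matrix.isHermitian_diagonal_iff.mpr
      intro i; exact Complex.conj_ofReal _
    simpa [Matrix.IsHermitian, conjTranspose_mul, star_eq_conjTranspose, mul_assoc] using
      congrArg (fun M => (h.eigenvectorUnitary : Matrix n n ℂ) * M *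
        (star (h.eigenvectorUnitary : Matrix n n ℂ))) this
  · simp [Matrix.IsHermitian]

lemma matFun_mul_matFun (f g : ℝ → ℝ) (h : ρ.IsHermitian) :
    matFun f ρ * matFun g ρ =
      (h.eigenvectorUnitary : Matrix n n ℂ) *
        Matrix.diagonal (fun i => ((f (h.eigenvalues i) * g (h.eigenvalues i) : ℝ) : ℂ)) *
          (star (h.eigenvectorUnitary : Matrix n n ℂ)) := by
  have hu : (star (h.eigenvectorUnitary : Matrix n n ℂ)) * (h.eigenvectorUnitary : Matrix n n ℂ) = 1 :=
    (Matrix.mem_unitaryGroup_iff').mp (h.eigenvectorUnitary).2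
  unfold matFun
  simp only [dif_pos h]
  calc _ = (h.eigenvectorUnitary : Matrix n n ℂ) *
      (Matrix.diagonal (fun i => (f (h.eigenvalues i) : ℂ)) *
      ((star (h.eigenvectorUnitary : Matrix n n ℂ)) * (h.eigenvectorUnitary : Matrix n n ℂ)) *
      Matrix.diagonal (fun i => (g (h.eigenvalues i) : ℂ))) *
        (star (h.eigenvectorUnitary : Matrix n n ℂ)) := by simp only [mul_assoc]
  _ = _ := by
    rw [hu, mul_one, Matrix.diagonal_mul_diagonal]
    congr 2
    ext i
    push_cast
    ring

lemma unitary_conj_mul (U : Matrix n n ℂ) (hU : star U * U = 1) (d e : n → ℂ) :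
    (U * Matrix.diagonal d * star U) * (U * Matrix.diagonal e * star U) =
      U * Matrix.diagonal (fun i => d i * e i) * star U := by
  calc _ = U * (Matrix.diagonal d * (star U * U) * Matrix.diagonal e) * star U := by
        simp only [mul_assoc]
  _ = _ := by rw [hU, mul_one, Matrix.diagonal_mul_diagonal]

lemma eigenvalues_pos_of_isUnit (hρ : ρ.PosSemidef) (hu : IsUnit ρ) (i : n) :
    0 < hρ.1.eigenvalues i := by
  rcases lt_or_eq_of_le (hρ.eigenvalues_nonneg i) with h | h
  · exact h
  · exfalso
    have hdet : ρ.det ≠ 0 := by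
      simpa using ((Matrix.isUnit_iff_isUnit_det _).mp hu).ne_zero
    rw [hρ.1.det_eq_prod_eigenvalues] at hdet
    exact hdet (Finset.prod_eq_zero (Finset.mem_univ i) (by simp [← h]))

lemma matSqrt_mul_matSqrt (hρ : ρ.PosSemidef) : matSqrt ρ * matSqrt ρ = ρ := by
  rw [matSqrt, matFun_mul_matFun _ _ hρ.1]
  have : (fun i => ((Real.sqrt (hρ.1.eigenvalues i) * Real.sqrt (hρ.1.eigenvalues i) : ℝ) : ℂ)) =
      (RCLike.ofReal ∘ hρ.1.eigenvalues) := by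
    funext i
    simp [Real.mul_self_sqrt (hρ.eigenvalues_nonneg i)]
  rw [this]
  exact hρ.1.spectral_theorem.symm

lemma conj_diag_eq_one (U : Matrix n n ℂ) (hU : star U * U = 1) (hU2 : U * star U = 1)
    (d lam : n → ℂ) (M J : Matrix n n ℂ)
    (hM : M = U * Matrix.diagonal lam * star U) (hJ : J = U * Matrix.diagonal d * star U)
    (hd : ∀ i, d i * lam i * d i = 1) : J * M * J = 1 := by
  rw [hM, hJ, unitary_conj_mul U hU, unitary_conj_mul U hU]
  have : (fun i => d i * lam i * d i) = fun _ => (1 : ℂ) := funext hd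
  rw [this, Matrix.diagonal_one, mul_one, hU2]

lemma matInvSqrt_conj (hρ : ρ.PosSemidef) (hu : IsUnit ρ) :
    matInvSqrt ρ * ρ * matInvSqrt ρ = 1 := by
  have h := hρ.1
  have hU : star (h.eigenvectorUnitary : Matrix n n ℂ) * (h.eigenvectorUnitary : Matrix n n ℂ) = 1 :=
    (Matrix.mem_unitaryGroup_iff').mp (h.eigenvectorUnitary).2
  have hU2 : (h.eigenvectorUnitary : Matrix n n ℂ) * star (h.eigenvectorUnitary : Matrix n n ℂ) = 1 :=
    (Matrix.mem_unitaryGroup_iff).mp (h.eigenvectorUnitary).2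
  refine conj_diag_eq_one _ hU hU2 (fun i => (((Real.sqrt (h.eigenvalues i))⁻¹ : ℝ) : ℂ))
    (fun i => ((h.eigenvalues i : ℝ) : ℂ)) _ _ h.spectral_theorem ?_ ?_
  · rw [matInvSqrt, matFun, dif_pos h]
  · intro i
    have hpos := eigenvalues_pos_of_isUnit hρ hu i
    have hs : Real.sqrt (h.eigenvalues i) ≠ 0 := (Real.sqrt_pos.mpr hpos).ne'
    rw [← Complex.ofReal_mul, ← Complex.ofReal_mul]
    norm_cast
    have := Real.mul_self_sqrt hpos.le
    field_simp
    exact (Real.sq_sqrt hpos.le).symm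

end AuxFC

section AuxPT
open Matrix
variable {A B C : Type*} [Fintype A] [Fintype B] [Fintype C]
  [DecidableEq A] [DecidableEq B] [DecidableEq C]

noncomputable def kron (J : Matrix B B ℂ) : Matrix (B × C) (B × C) ℂ :=
  fun x y => J x.1 y.1 * (if x.2 = y.2 then 1 else 0)

set_option linter.unusedSectionVars false

lemma extBC_mul_apply (N : Matrix (B × C) (B × C) ℂ) (X : Matrix (A × B × C) (A × B × C) ℂ)
    (a : A) (x : B × C) (z : A × B × C) :
    (extBC (A := A) N * X) (a, x) z = ∑ w : B × C, N x w * X (a, w) z := by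
  rw [Matrix.mul_apply, Fintype.sum_prod_type, Finset.sum_comm]
  simp [extBC, ite_mul, Finset.sum_ite_eq]

lemma mul_extBC_apply (N : Matrix (B × C) (B × C) ℂ) (X : Matrix (A × B × C) (A × B × C) ℂ)
    (a : A) (x : B × C) (z : A × B × C) :
    (X * extBC (A := A) N) z (a, x) = ∑ w : B × C, X z (a, w) * N w x := by
  rw [Matrix.mul_apply, Fintype.sum_prod_type, Finset.sum_comm]
  simp [extBC, mul_ite, Finset.sum_ite_eq', mul_comm, mul_left_comm]

lemma ptA_extBC_mul (N : Matrix (B × C) (B × C) ℂ) (X : Matrix (A × B × C) (A × B × C) ℂ) :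
    ptA (A := A) (extBC N * X) = N * ptA X := by
  funext x y
  simp only [ptA, extBC_mul_apply]
  rw [Matrix.mul_apply]
  simp only [ptA, Finset.mul_sum]
  apply Finset.sum_comm

lemma ptA_mul_extBC (N : Matrix (B × C) (B × C) ℂ) (X : Matrix (A × B × C) (A × B × C) ℂ) :
    ptA (A := A) (X * extBC N) = ptA X * N := by
  funext x y
  simp only [ptA, mul_extBC_apply]
  rw [Matrix.mul_apply]
  simp only [ptA, Finset.sum_mul]
  apply Finset.sum_comm

lemma ptA_extAB (M : Matrix (A × B) (A × B) ℂ) :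
    ptA (extAB M) = kron (C := C) (bptFst M) := by
  funext x y
  simp [ptA, extAB, kron, bptFst, Finset.sum_mul]

lemma extB_eq (J : Matrix B B ℂ) : extB (A := A) (C := C) J = extBC (kron J) := by
  funext x y
  simp [extB, extBC, kron, mul_assoc]

lemma kron_mul (J K : Matrix B B ℂ) : kron (C := C) J * kron K = kron (J * K) := by
  funext x y
  simp only [kron, Matrix.mul_apply, Fintype.sum_prod_type, mul_ite, mul_one, mul_zero, ite_mul,
    zero_mul, Finset.sum_ite_eq', Finset.mem_univ, if_true]
  by_cases h : x.2 = y.2 <;> simp [h, Finset.sum_mul]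

lemma kron_one : kron (C := C) (1 : Matrix B B ℂ) = 1 := by
  funext x y
  simp only [kron, Matrix.one_apply]
  rcases x with ⟨b, c⟩; rcases y with ⟨b2, c2⟩
  by_cases hb : b = b2 <;> by_cases hc : c = c2 <;>
    simp [hb, hc, Prod.ext_iff]

lemma trace_eq_trace_ptA (X : Matrix (A × B × C) (A × B × C) ℂ) :
    X.trace = (ptA X).trace := by
  simp only [Matrix.trace, Matrix.diag, ptA, Fintype.sum_prod_type]
  exact Finset.sum_comm.trans (Finset.sum_congr rfl fun b _ => Finset.sum_comm)

lemma extBC_mul (M N : Matrix (B × C) (B × C) ℂ) :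
    extBC (A := A) M * extBC N = extBC (M * N) := by
  funext x y
  rcases x with ⟨a, x⟩; rcases y with ⟨a2, y⟩
  rw [extBC_mul_apply]
  simp only [extBC, Matrix.mul_apply, mul_ite, mul_one, mul_zero, Finset.mul_sum]
  by_cases h : a = a2 <;> simp [h, mul_comm]

lemma extBC_conjTranspose (M : Matrix (B × C) (B × C) ℂ) :
    (extBC (A := A) M)ᴴ = extBC Mᴴ := by
  funext x y
  rcases x with ⟨a, x⟩; rcases y with ⟨a2, y⟩
  by_cases h : a = a2 <;>
    simp [Matrix.conjTranspose_apply, extBC, h, eq_comm]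

lemma kron_conjTranspose (J : Matrix B B ℂ) :
    (kron (C := C) J)ᴴ = kron Jᴴ := by
  funext x y
  by_cases h : x.2 = y.2 <;>
    simp [Matrix.conjTranspose_apply, kron, h, eq_comm]

lemma extAB_posSemidef {M : Matrix (A × B) (A × B) ℂ} (hM : M.PosSemidef) :
    (extAB (C := C) M).PosSemidef := by
  refine Matrix.PosSemidef.of_dotProduct_mulVec_nonneg ?_ ?_
  · funext x y
    rcases x with ⟨a, b, c⟩; rcases y with ⟨a2, b2, c2⟩
    have h1 := congrFun (congrFun hM.1 (a, b)) (a2, b2)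
    simp only [Matrix.conjTranspose_apply] at h1
    by_cases h : c = c2 <;>
      simp [Matrix.conjTranspose_apply, extAB, h, eq_comm, h1]
  · intro v
    have key : dotProduct (star v) (extAB (C := C) M *ᵥ v) =
        ∑ c : C, dotProduct (star (fun p : A × B => v (p.1, p.2, c)))
          (M *ᵥ (fun p : A × B => v (p.1, p.2, c))) := by
      simp only [dotProduct, Matrix.mulVec, extAB, Pi.star_apply,
        Fintype.sum_prod_type, mul_ite, mul_one, mul_zero, ite_mul, zero_mul,
        Finset.sum_ite_eq, Finset.mem_univ, if_true]
      exact (Finset.sum_congr rfl fun a _ => Finset.sum_comm).trans Finset.sum_comm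
    rw [key]
    exact Finset.sum_nonneg fun c _ => hM.dotProduct_mulVec_nonneg _

lemma bptFst_posSemidef {X Y : Type*} [Fintype X] [Fintype Y] [DecidableEq X]
    {M : Matrix (X × Y) (X × Y) ℂ} (hM : M.PosSemidef) : (bptFst M).PosSemidef := by
  refine Matrix.PosSemidef.of_dotProduct_mulVec_nonneg ?_ ?_
  · funext b b2
    have : ∀ x : X, (star (M (x, b2) (x, b))) = M (x, b) (x, b2) := fun x =>
      congrFun (congrFun hM.1 (x, b)) (x, b2)
    simp only [Matrix.conjTranspose_apply, bptFst, star_sum]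
    exact Finset.sum_congr rfl fun x _ => this x
  · intro v
    have key : dotProduct (star v) (bptFst M *ᵥ v) =
        ∑ x : X, dotProduct (star (fun p : X × Y => if p.1 = x then v p.2 else 0))
          (M *ᵥ (fun p : X × Y => if p.1 = x then v p.2 else 0)) := by
      simp only [dotProduct, Matrix.mulVec, bptFst, Pi.star_apply,
        Fintype.sum_prod_type, apply_ite star, star_zero, ite_mul, zero_mul, mul_ite, mul_zero,
        Finset.sum_ite_irrel, Finset.sum_const_zero, Finset.sum_ite_eq', Finset.mem_univ, if_true]
      simp only [Finset.sum_mul, Finset.mul_sum]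
      exact (Finset.sum_comm.trans (Finset.sum_congr rfl fun b _ => Finset.sum_comm)).symm
    rw [key]
    exact Finset.sum_nonneg fun x _ => hM.dotProduct_mulVec_nonneg _

end AuxPT

/-- The Petz recovery map `P_{B→BC}` applied to `ρ_AB` (with
`ρ_B = Tr_A ρ_AB = Tr_C ρ_BC` invertible) produces a positive semidefinite, trace-one
operator `ϱ_ABC = ρ_BC^{1/2} ρ_B^{-1/2} ρ_AB ρ_B^{-1/2} ρ_BC^{1/2}` with
`Tr_A ϱ_ABC = ρ_BC`. -/
theorem petz_output_density {A B C : Type*} [Fintype A] [Fintype B] [Fintype C]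
    [DecidableEq A] [DecidableEq B] [DecidableEq C]
    (ρAB : Matrix (A × B) (A × B) ℂ) (ρBC : Matrix (B × C) (B × C) ℂ)
    (hAB : IsDensity ρAB) (hBC : IsDensity ρBC)
    (hB : bptFst ρAB = bptSnd ρBC) (hBinv : IsUnit (bptFst ρAB))
    (ϱ : Matrix (A × B × C) (A × B × C) ℂ)
    (hϱ : ϱ = extBC (matSqrt ρBC) * extB (matInvSqrt (bptFst ρAB)) * extAB ρAB
        * extB (matInvSqrt (bptFst ρAB)) * extBC (matSqrt ρBC)) :
    ϱ.PosSemidef ∧ ϱ.trace = 1 ∧ ptA ϱ = ρBC := by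
  have hρB : (bptFst ρAB).PosSemidef := bptFst_posSemidef hAB.1
  have hS : (matSqrt ρBC).IsHermitian := matFun_isHermitian _ _
  have hJ : (matInvSqrt (bptFst ρAB)).IsHermitian := matFun_isHermitian _ _
  have hJc : (extB (A := A) (C := C) (matInvSqrt (bptFst ρAB)))ᴴ
      = extB (matInvSqrt (bptFst ρAB)) := by
    rw [extB_eq, extBC_conjTranspose, kron_conjTranspose, hJ.eq, ← extB_eq]
  have hSc : (extBC (A := A) (matSqrt ρBC))ᴴ = extBC (matSqrt ρBC) := by
    rw [extBC_conjTranspose, hS.eq]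
  have hpos : ϱ.PosSemidef := by
    have h1 : ϱ = (extB (A := A) (C := C) (matInvSqrt (bptFst ρAB)) * extBC (matSqrt ρBC))ᴴ
        * extAB ρAB * (extB (matInvSqrt (bptFst ρAB)) * extBC (matSqrt ρBC)) := by
      rw [hϱ, Matrix.conjTranspose_mul, hJc, hSc]
      simp only [mul_assoc]
    rw [h1]
    exact (extAB_posSemidef hAB.1).conjTranspose_mul_mul_same _
  have hkron : kron (C := C) (matInvSqrt (bptFst ρAB)) * kron (bptFst ρAB)
      * kron (matInvSqrt (bptFst ρAB)) = 1 := by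
    rw [kron_mul, kron_mul, matInvSqrt_conj hρB hBinv, kron_one]
  have hptA : ptA ϱ = ρBC := by
    rw [hϱ, extB_eq, ptA_mul_extBC, ptA_mul_extBC, extBC_mul, ptA_extBC_mul, ptA_extAB]
    calc matSqrt ρBC * kron (matInvSqrt (bptFst ρAB)) * kron (bptFst ρAB)
          * kron (matInvSqrt (bptFst ρAB)) * matSqrt ρBC
        = matSqrt ρBC * (kron (matInvSqrt (bptFst ρAB)) * kron (bptFst ρAB)
          * kron (matInvSqrt (bptFst ρAB))) * matSqrt ρBC := by simp only [mul_assoc]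
      _ = ρBC := by rw [hkron, mul_one, matSqrt_mul_matSqrt hBC.1]
  refine ⟨hpos, ?_, hptA⟩
  rw [trace_eq_trace_ptA, hptA, hBC.2]
end

section
/- There exist density operators ρ_AB on ℂ²⊗ℂ² and ρ_BC on ℂ²⊗ℂ² with Tr_A(ρ_AB) = Tr_C(ρ_BC) that are compatible (i.e., there exists a density operator ρ_ABC on ℂ²⊗ℂ²⊗ℂ² with Tr_C(ρ_ABC) = ρ_AB and Tr_A(ρ_ABC) = ρ_BC), yet no density operator ρ_ABC with these two marginals satisfies I_{ρ_ABC}(A:C|B) = 0. Hence the set of pairs of bipartite marginals compatible with a quantum Markov chain is strictly contained in the set of compatible pairs of bipartite marginals. -/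
open scoped Matrix ComplexOrder

variable {A B C : Type*}

section SpectralHelpers
variable {n : Type*} [Fintype n] [DecidableEq n]

lemma spec_decomp {M : Matrix n n ℂ} (hM : M.IsHermitian) :
    M = (hM.eigenvectorUnitary : Matrix n n ℂ) *
      Matrix.diagonal (fun i => (hM.eigenvalues i : ℂ)) *
      star (hM.eigenvectorUnitary : Matrix n n ℂ) := by
  convert hM.spectral_theorem using 2
  rw [Unitary.conjStarAlgAut_apply]; rfl

lemma star_mul_selfU {M : Matrix n n ℂ} (hM : M.IsHermitian) :
    star (hM.eigenvectorUnitary : Matrix n n ℂ) * (hM.eigenvectorUnitary : Matrix n n ℂ) = 1 :=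
  Unitary.coe_star_mul_self _

lemma uconj_mul {U X Y : Matrix n n ℂ} (hU : star U * U = 1) :
    (U * X * star U) * (U * Y * star U) = U * (X * Y) * star U := by
  calc (U * X * star U) * (U * Y * star U)
      = U * (X * ((star U * U) * Y)) * star U := by noncomm_ring
    _ = _ := by rw [hU]; noncomm_ring

lemma uconj_eq_zero {U Z : Matrix n n ℂ} (hU : star U * U = 1) (h : U * Z * star U = 0) :
    Z = 0 := by
  calc Z = (star U * U) * Z * (star U * U) := by rw [hU]; noncomm_ring
    _ = star U * (U * Z * star U) * U := by noncomm_ring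
    _ = 0 := by rw [h]; simp

lemma trace_eq_sum_eig {M : Matrix n n ℂ} (hM : M.IsHermitian) :
    M.trace = ∑ i, (hM.eigenvalues i : ℂ) := by
  conv_lhs => rw [spec_decomp hM]
  rw [Matrix.trace_mul_cycle, star_mul_selfU hM, Matrix.one_mul, Matrix.trace_diagonal]

lemma sq_decomp {M : Matrix n n ℂ} (hM : M.IsHermitian) :
    M * M = (hM.eigenvectorUnitary : Matrix n n ℂ) *
      (Matrix.diagonal (fun i => (hM.eigenvalues i : ℂ)) *
       Matrix.diagonal (fun i => (hM.eigenvalues i : ℂ))) *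
      star (hM.eigenvectorUnitary : Matrix n n ℂ) := by
  conv_lhs => rw [spec_decomp hM]
  exact uconj_mul (star_mul_selfU hM)

lemma trace_sq_eq_sum_eig {M : Matrix n n ℂ} (hM : M.IsHermitian) :
    (M * M).trace = ∑ i, (hM.eigenvalues i : ℂ)^2 := by
  rw [sq_decomp hM, Matrix.trace_mul_cycle, star_mul_selfU hM, Matrix.one_mul,
    Matrix.diagonal_mul_diagonal, Matrix.trace_diagonal]
  simp [sq]

lemma diag_cubic_of {U D M : Matrix n n ℂ} (hU : star U * U = 1)
    (h1 : M = U * D * star U) (h : M * M * M - M * M + ((2:ℂ)/9) • M = 0) :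
    D * D * D - D * D + ((2:ℂ)/9) • D = 0 := by
  subst h1
  apply uconj_eq_zero hU
  have e2 := uconj_mul (X := D) (Y := D) hU
  have e3 := uconj_mul (X := D * D) (Y := D) hU
  rw [Matrix.mul_add, Matrix.add_mul, Matrix.mul_sub, Matrix.sub_mul,
    Matrix.mul_smul, Matrix.smul_mul, ← e2, ← e3, ← e2]
  exact h

lemma eig_cubic {M : Matrix n n ℂ} (hM : M.IsHermitian)
    (h : M * M * M - M * M + ((2:ℂ)/9) • M = 0) (i : n) :
    hM.eigenvalues i = 0 ∨ hM.eigenvalues i = 1/3 ∨ hM.eigenvalues i = 2/3 := by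
  have key := diag_cubic_of (star_mul_selfU hM) (spec_decomp hM) h
  have keyi := congrFun (congrFun key i) i
  simp only [Matrix.sub_apply, Matrix.add_apply, Matrix.smul_apply,
    Matrix.diagonal_mul_diagonal, Matrix.diagonal_apply_eq, Matrix.zero_apply,
    smul_eq_mul] at keyi
  set l := hM.eigenvalues i
  have hl : l * l * l - l * l + 2/9 * l = 0 := by
    have : ((l * l * l - l * l + 2/9 * l : ℝ) : ℂ) = 0 := by push_cast; linear_combination keyi
    exact_mod_cast this
  have hfac : l * (l - 1/3) * (l - 2/3) = 0 := by linear_combination hl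
  rcases mul_eq_zero.mp hfac with h' | h'
  · rcases mul_eq_zero.mp h' with h'' | h''
    · exact Or.inl h''
    · exact Or.inr (Or.inl (by linarith))
  · exact Or.inr (Or.inr (by linarith))

lemma vnEntropy_cubic {M : Matrix n n ℂ} (hM : M.IsHermitian)
    (hc : M * M * M - M * M + ((2:ℂ)/9) • M = 0)
    (htr : M.trace = 1) (htr2 : (M * M).trace = 5/9) :
    vnEntropy M = -(1/3 * Real.log (1/3) + 2/3 * Real.log (2/3)) := by
  rw [vnEntropy, dif_pos hM]
  have hsum : ∑ i, hM.eigenvalues i = 1 := by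
    have h1 := (trace_eq_sum_eig hM).symm.trans htr
    exact_mod_cast (by push_cast at h1 ⊢; exact h1 : ((∑ i, hM.eigenvalues i : ℝ) : ℂ) = 1)
  have hsum2 : ∑ i, (hM.eigenvalues i)^2 = 5/9 := by
    have h1 := (trace_sq_eq_sum_eig hM).symm.trans htr2
    have h2 : ((∑ i, (hM.eigenvalues i)^2 : ℝ) : ℂ) = ((5/9 : ℝ) : ℂ) := by
      push_cast at h1 ⊢; rw [h1]
    exact_mod_cast h2
  have hpt : ∀ i, hM.eigenvalues i * Real.log (hM.eigenvalues i) =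
      (2 * Real.log (1/3) - Real.log (2/3)) * hM.eigenvalues i +
      (3 * (Real.log (2/3) - Real.log (1/3))) * (hM.eigenvalues i)^2 := by
    intro i
    rcases eig_cubic hM hc i with h | h | h <;> rw [h] <;> ring_nf <;> simp
  calc -∑ i, hM.eigenvalues i * Real.log (hM.eigenvalues i)
      = -((2 * Real.log (1/3) - Real.log (2/3)) * (∑ i, hM.eigenvalues i) +
          (3 * (Real.log (2/3) - Real.log (1/3))) * (∑ i, (hM.eigenvalues i)^2)) := by
        rw [Finset.mul_sum, Finset.mul_sum, ← Finset.sum_add_distrib]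
        congr 1
        exact Finset.sum_congr rfl fun i _ => hpt i
    _ = _ := by rw [hsum, hsum2]; ring

lemma vnEntropy_proj {M : Matrix n n ℂ} (hM : M.IsHermitian) (hp : M * M = M) :
    vnEntropy M = 0 := by
  rw [vnEntropy, dif_pos hM]
  have key : ∀ i, hM.eigenvalues i = 0 ∨ hM.eigenvalues i = 1 := by
    intro i
    have hD : Matrix.diagonal (fun i => (hM.eigenvalues i : ℂ)) *
        Matrix.diagonal (fun i => (hM.eigenvalues i : ℂ)) -
        Matrix.diagonal (fun i => (hM.eigenvalues i : ℂ)) = 0 := by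
      apply uconj_eq_zero (star_mul_selfU hM)
      rw [Matrix.mul_sub, Matrix.sub_mul, ← uconj_mul (star_mul_selfU hM), ← spec_decomp hM, hp]
      simp
    have keyi := congrFun (congrFun hD i) i
    simp only [Matrix.sub_apply, Matrix.diagonal_mul_diagonal, Matrix.diagonal_apply_eq,
      Matrix.zero_apply] at keyi
    have hl : hM.eigenvalues i * hM.eigenvalues i - hM.eigenvalues i = 0 := by
      exact_mod_cast (by push_cast; linear_combination keyi :
        ((hM.eigenvalues i * hM.eigenvalues i - hM.eigenvalues i : ℝ) : ℂ) = 0)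
    have := mul_eq_zero.mp (by linear_combination hl :
      hM.eigenvalues i * (hM.eigenvalues i - 1) = 0)
    rcases this with h | h
    · exact Or.inl h
    · exact Or.inr (by linarith)
  have hz : ∀ i ∈ Finset.univ, hM.eigenvalues i * Real.log (hM.eigenvalues i) = 0 := by
    intro i _
    rcases key i with h | h <;> rw [h] <;> simp
  rw [Finset.sum_congr rfl hz]
  simp

end SpectralHelpers

section WState

/-- The (unnormalized) W vector. -/
noncomputable def wv : (Fin 2 × Fin 2 × Fin 2) → ℂ :=
  fun x => if x = (0,0,1) ∨ x = (0,1,0) ∨ x = (1,0,0) then 1 else 0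

/-- The W state density matrix. -/
noncomputable def Wmat : Matrix (Fin 2 × Fin 2 × Fin 2) (Fin 2 × Fin 2 × Fin 2) ℂ :=
  fun x y => wv x * wv y / 3

/-- The common two-qubit marginal of the W state. -/
noncomputable def mAB : Matrix (Fin 2 × Fin 2) (Fin 2 × Fin 2) ℂ :=
  fun p q => if (p = (0,0) ∧ q = (0,0)) ∨
      ((p = (0,1) ∨ p = (1,0)) ∧ (q = (0,1) ∨ q = (1,0))) then 1/3 else 0

/-- The one-qubit marginal of the W state. -/
noncomputable def mB : Matrix (Fin 2) (Fin 2) ℂ :=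
  fun b b' => if b = 0 ∧ b' = 0 then 2/3 else if b = 1 ∧ b' = 1 then 1/3 else 0

lemma star_wv (x) : star (wv x) = wv x := by
  rw [wv]; split <;> simp

lemma ptC_Wmat : ptC Wmat = mAB := by
  ext ⟨a, b⟩ ⟨a', b'⟩
  fin_cases a <;> fin_cases b <;> fin_cases a' <;> fin_cases b' <;>
    simp [ptC, Wmat, wv, mAB, Fin.sum_univ_two, Prod.ext_iff]

lemma ptA_Wmat : ptA Wmat = mAB := by
  ext ⟨b, c⟩ ⟨b', c'⟩
  fin_cases b <;> fin_cases c <;> fin_cases b' <;> fin_cases c' <;>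
    simp [ptA, Wmat, wv, mAB, Fin.sum_univ_two, Prod.ext_iff]

lemma ptAC_Wmat : ptAC Wmat = mB := by
  ext b b'
  fin_cases b <;> fin_cases b' <;>
    simp [ptAC, Wmat, wv, mB, Fin.sum_univ_two, Prod.ext_iff] <;> norm_num

lemma mAB_herm : mAB.IsHermitian := by
  ext ⟨a, b⟩ ⟨a', b'⟩
  fin_cases a <;> fin_cases b <;> fin_cases a' <;> fin_cases b' <;>
    simp [Matrix.conjTranspose_apply, mAB, Prod.ext_iff]

lemma mB_herm : mB.IsHermitian := by
  ext b b'
  fin_cases b <;> fin_cases b' <;> simp [Matrix.conjTranspose_apply, mB]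

lemma Wmat_herm : Wmat.IsHermitian := by
  ext x y
  simp only [Matrix.conjTranspose_apply, Wmat]
  rw [star_div₀, star_mul', star_wv, star_wv]
  norm_num [mul_comm]

lemma wv_sq_sum : ∑ z, wv z * wv z = 3 := by
  simp [wv, Fintype.sum_prod_type, Fin.sum_univ_two, Prod.ext_iff]
  norm_num

lemma Wmat_proj : Wmat * Wmat = Wmat := by
  ext x y
  rw [Matrix.mul_apply]
  calc ∑ z, Wmat x z * Wmat z y = (wv x * wv y / 9) * ∑ z, wv z * wv z := by
        rw [Finset.mul_sum]
        exact Finset.sum_congr rfl fun z _ => by simp only [Wmat]; ring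
    _ = Wmat x y := by rw [wv_sq_sum]; simp only [Wmat]; ring

lemma Wmat_trace : Wmat.trace = 1 := by
  have h : Wmat.trace = (∑ z, wv z * wv z) / 3 := by
    rw [Matrix.trace, Finset.sum_div]
    exact Finset.sum_congr rfl fun z _ => by simp [Matrix.diag_apply, Wmat]
  rw [h, wv_sq_sum]; norm_num

lemma mAB_trace : mAB.trace = 1 := by
  simp [Matrix.trace, mAB, Fintype.sum_prod_type, Fin.sum_univ_two, Prod.ext_iff]
  norm_num

lemma mAB_sq_trace : (mAB * mAB).trace = 5/9 := by
  simp [Matrix.trace, Matrix.mul_apply, mAB, Fintype.sum_prod_type, Fin.sum_univ_two,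
    Prod.ext_iff]
  norm_num

lemma mAB_cubic : mAB * mAB * mAB - mAB * mAB + ((2:ℂ)/9) • mAB = 0 := by
  ext ⟨a, b⟩ ⟨a', b'⟩
  fin_cases a <;> fin_cases b <;> fin_cases a' <;> fin_cases b' <;>
    simp [Matrix.mul_apply, mAB, Fintype.sum_prod_type, Fin.sum_univ_two, Prod.ext_iff] <;>
    norm_num

lemma mB_trace : mB.trace = 1 := by
  simp [Matrix.trace, mB, Fin.sum_univ_two]
  norm_num

lemma mB_sq_trace : (mB * mB).trace = 5/9 := by
  simp [Matrix.trace, Matrix.mul_apply, mB, Fin.sum_univ_two]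
  norm_num

lemma mB_cubic : mB * mB * mB - mB * mB + ((2:ℂ)/9) • mB = 0 := by
  ext b b'
  fin_cases b <;> fin_cases b' <;>
    simp [Matrix.mul_apply, mB, Fin.sum_univ_two] <;> norm_num

noncomputable def tensC' (v : Fin 2 × Fin 2 → ℂ) (c : Fin 2) : (Fin 2 × Fin 2 × Fin 2) → ℂ :=
  fun x => if x.2.2 = c then v (x.1, x.2.1) else 0

noncomputable def tensA' (v : Fin 2 × Fin 2 → ℂ) (a : Fin 2) : (Fin 2 × Fin 2 × Fin 2) → ℂ :=
  fun x => if x.1 = a then v x.2 else 0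

lemma qform_ptC (ρ : Matrix (Fin 2 × Fin 2 × Fin 2) (Fin 2 × Fin 2 × Fin 2) ℂ)
    (v : Fin 2 × Fin 2 → ℂ) :
    star v ⬝ᵥ (ptC ρ *ᵥ v) = ∑ c : Fin 2, star (tensC' v c) ⬝ᵥ (ρ *ᵥ tensC' v c) := by
  simp only [dotProduct, Matrix.mulVec, ptC, tensC', Pi.star_apply,
    Fintype.sum_prod_type, Fin.sum_univ_two]
  norm_num
  ring

lemma qform_ptA (ρ : Matrix (Fin 2 × Fin 2 × Fin 2) (Fin 2 × Fin 2 × Fin 2) ℂ)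
    (v : Fin 2 × Fin 2 → ℂ) :
    star v ⬝ᵥ (ptA ρ *ᵥ v) = ∑ a : Fin 2, star (tensA' v a) ⬝ᵥ (ρ *ᵥ tensA' v a) := by
  simp only [dotProduct, Matrix.mulVec, ptA, tensA', Pi.star_apply,
    Fintype.sum_prod_type, Fin.sum_univ_two]
  norm_num
  ring

lemma Wmat_psd : Wmat.PosSemidef := by
  refine Matrix.PosSemidef.of_dotProduct_mulVec_nonneg Wmat_herm fun x => ?_
  have key : star x ⬝ᵥ (Wmat *ᵥ x) =
      star (∑ y, wv y * x y) * (∑ y, wv y * x y) / 3 := by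
    simp only [dotProduct, Matrix.mulVec, Wmat, Pi.star_apply, star_sum, star_mul']
    rw [Finset.sum_mul, Finset.sum_div]
    refine Finset.sum_congr rfl fun a _ => ?_
    rw [star_wv, Finset.mul_sum, Finset.mul_sum, Finset.sum_div]
    refine Finset.sum_congr rfl fun y _ => ?_
    ring
  rw [key]
  set c := ∑ y, wv y * x y
  have h1 : star c * c / 3 = ((Complex.normSq c / 3 : ℝ) : ℂ) := by
    rw [Complex.star_def]
    push_cast
    rw [← Complex.normSq_eq_conj_mul_self]
  rw [h1, Complex.zero_le_real]
  exact div_nonneg (Complex.normSq_nonneg c) (by norm_num)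

lemma Wmat_density : IsDensity Wmat := ⟨Wmat_psd, Wmat_trace⟩

lemma mAB_psd : mAB.PosSemidef := by
  refine Matrix.PosSemidef.of_dotProduct_mulVec_nonneg mAB_herm fun v => ?_
  rw [← ptC_Wmat, qform_ptC]
  exact Finset.sum_nonneg fun c _ => Wmat_psd.dotProduct_mulVec_nonneg _

lemma mAB_density : IsDensity mAB := ⟨mAB_psd, mAB_trace⟩

end WState

section Uniqueness

/-- Any density matrix with both marginals equal to `mAB` is the W state. -/
lemma ext_unique (ρ : Matrix (Fin 2 × Fin 2 × Fin 2) (Fin 2 × Fin 2 × Fin 2) ℂ)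
    (hd : ρ.PosSemidef) (hC : ptC ρ = mAB) (hA : ptA ρ = mAB) : ρ = Wmat := by
  have herm : ∀ x y, star (ρ y x) = ρ x y := fun x y => hd.1.apply x y
  -- kernel vectors of mAB
  have kerC : ∀ (v : Fin 2 × Fin 2 → ℂ), star v ⬝ᵥ (mAB *ᵥ v) = 0 →
      ∀ c, ρ *ᵥ tensC' v c = 0 := by
    intro v hv c
    have hsum : ∑ c : Fin 2, star (tensC' v c) ⬝ᵥ (ρ *ᵥ tensC' v c) = 0 := by
      rw [← qform_ptC, hC, hv]
    have hterm := (Finset.sum_eq_zero_iff_of_nonneg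
      (fun c _ => hd.dotProduct_mulVec_nonneg (tensC' v c))).mp hsum c (Finset.mem_univ c)
    exact (hd.dotProduct_mulVec_zero_iff _).mp hterm
  have kerA : ∀ (v : Fin 2 × Fin 2 → ℂ), star v ⬝ᵥ (mAB *ᵥ v) = 0 →
      ∀ a, ρ *ᵥ tensA' v a = 0 := by
    intro v hv a
    have hsum : ∑ a : Fin 2, star (tensA' v a) ⬝ᵥ (ρ *ᵥ tensA' v a) = 0 := by
      rw [← qform_ptA, hA, hv]
    have hterm := (Finset.sum_eq_zero_iff_of_nonneg
      (fun a _ => hd.dotProduct_mulVec_nonneg (tensA' v a))).mp hsum a (Finset.mem_univ a)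
    exact (hd.dotProduct_mulVec_zero_iff _).mp hterm
  -- the two kernel vectors
  have hv1 : star (fun p : Fin 2 × Fin 2 => if p = (1,1) then (1:ℂ) else 0) ⬝ᵥ
      (mAB *ᵥ (fun p => if p = (1,1) then 1 else 0)) = 0 := by
    simp [dotProduct, Matrix.mulVec, mAB, Fintype.sum_prod_type, Fin.sum_univ_two,
      Prod.ext_iff]
  have hv2 : star (fun p : Fin 2 × Fin 2 => (if p = (0,1) then (1:ℂ) else 0) -
        (if p = (1,0) then 1 else 0)) ⬝ᵥ
      (mAB *ᵥ (fun p => (if p = (0,1) then 1 else 0) - (if p = (1,0) then 1 else 0))) = 0 := by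
    simp [dotProduct, Matrix.mulVec, mAB, Fintype.sum_prod_type, Fin.sum_univ_two,
      Prod.ext_iff]
  -- extracted column relations
  have hz1 : ∀ x c, ρ x (1,1,c) = 0 := by
    intro x c
    have h := congrFun (kerC _ hv1 c) x
    simpa [Matrix.mulVec, dotProduct, tensC', Fintype.sum_prod_type, Fin.sum_univ_two, Prod.ext_iff]
      using h
  have hz2 : ∀ x a, ρ x (a,1,1) = 0 := by
    intro x a
    have h := congrFun (kerA _ hv1 a) x
    simpa [Matrix.mulVec, dotProduct, tensA', Fintype.sum_prod_type, Fin.sum_univ_two, Prod.ext_iff]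
      using h
  have he1 : ∀ x c, ρ x (0,1,c) = ρ x (1,0,c) := by
    intro x c
    have h := congrFun (kerC _ hv2 c) x
    simp [Matrix.mulVec, dotProduct, tensC', Fintype.sum_prod_type, Fin.sum_univ_two, Prod.ext_iff,
      mul_sub, sub_eq_zero] at h
    exact h
  have he2 : ∀ x a, ρ x (a,0,1) = ρ x (a,1,0) := by
    intro x a
    have h := congrFun (kerA _ hv2 a) x
    simp [Matrix.mulVec, dotProduct, tensA', Fintype.sum_prod_type, Fin.sum_univ_two, Prod.ext_iff,
      mul_sub, sub_eq_zero] at h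
    exact h
  -- diagonal values
  have d010 : ρ (0,1,0) (0,1,0) = 1/3 := by
    have h := congrFun (congrFun hC (0,1)) (0,1)
    simp [ptC, mAB, Fin.sum_univ_two, Prod.ext_iff, -Prod.mk_one_one, -Prod.mk_zero_zero] at h
    have h2 := hz2 (0,1,1) 0
    rw [h2] at h
    linear_combination h
  have d100 : ρ (1,0,0) (1,0,0) = 1/3 := by
    have h := congrFun (congrFun hC (1,0)) (1,0)
    simp [ptC, mAB, Fin.sum_univ_two, Prod.ext_iff, -Prod.mk_one_one, -Prod.mk_zero_zero] at h
    have h2 : ρ (1,0,1) (1,0,1) = 0 := by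
      rw [he2 (1,0,1) 1]; exact hz1 (1,0,1) 0
    rw [h2] at h
    linear_combination h
  have c010 : ρ (0,1,0) (0,0,1) = 1/3 := by
    rw [he2 (0,1,0) 0, d010]
  have d001 : ρ (0,0,1) (0,0,1) = 1/3 := by
    rw [he2 (0,0,1) 0, ← herm, c010]
    norm_num
  have d000 : ρ (0,0,0) (0,0,0) = 0 := by
    have h := congrFun (congrFun hC (0,0)) (0,0)
    simp [ptC, mAB, Fin.sum_univ_two, Prod.ext_iff, -Prod.mk_one_one, -Prod.mk_zero_zero] at h
    rw [d001] at h
    linear_combination h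
  have hz0 : ∀ x, ρ x (0,0,0) = 0 := by
    have hq : star (fun y : Fin 2 × Fin 2 × Fin 2 => if y = (0,0,0) then (1:ℂ) else 0) ⬝ᵥ
        (ρ *ᵥ (fun y => if y = (0,0,0) then 1 else 0)) = 0 := by
      have : star (fun y : Fin 2 × Fin 2 × Fin 2 => if y = (0,0,0) then (1:ℂ) else 0) ⬝ᵥ
          (ρ *ᵥ (fun y => if y = (0,0,0) then 1 else 0)) = ρ (0,0,0) (0,0,0) := by
        simp [dotProduct, Matrix.mulVec, Fintype.sum_prod_type, Fin.sum_univ_two,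
          Prod.ext_iff]
      rw [this, d000]
    have hk := (hd.dotProduct_mulVec_zero_iff _).mp hq
    intro x
    have h := congrFun hk x
    simpa [Matrix.mulVec, dotProduct, Fintype.sum_prod_type, Fin.sum_univ_two, Prod.ext_iff] using h
  -- the symmetric column
  have s : ∀ x, ρ x (0,1,0) = wv x / 3 := by
    intro x
    obtain ⟨a, b, c⟩ := x
    fin_cases a <;> fin_cases b <;> fin_cases c <;>
      simp only [Fin.mk_zero, Fin.mk_one, Fin.isValue]
    · rw [← herm, hz0 (0,1,0)]; simp [wv, Prod.ext_iff]
    · rw [← herm, c010]; simp [wv, Prod.ext_iff]; try norm_num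
    · rw [d010]; simp [wv, Prod.ext_iff]
    · rw [← herm, hz2 (0,1,0) 0]; simp [wv, Prod.ext_iff]
    · rw [he1 (1,0,0) 0, d100]; simp [wv, Prod.ext_iff]
    · rw [← herm, he2 (0,1,0) 1, hz1 (0,1,0) 0]; simp [wv, Prod.ext_iff]
    · rw [← herm, hz1 (0,1,0) 0]; simp [wv, Prod.ext_iff]
    · rw [← herm, hz1 (0,1,0) 1]; simp [wv, Prod.ext_iff]
  -- conclude
  ext x y
  obtain ⟨a, b, c⟩ := y
  have hW : ∀ y : Fin 2 × Fin 2 × Fin 2, Wmat x y = wv x * wv y / 3 := fun y => rfl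
  fin_cases a <;> fin_cases b <;> fin_cases c <;>
    simp only [Fin.mk_zero, Fin.mk_one, Fin.isValue]
  · rw [hz0 x, hW]; simp [wv, Prod.ext_iff]
  · rw [he2 x 0, s x, hW]; simp only [wv, Prod.ext_iff]; norm_num
  · rw [s x, hW]; simp only [wv, Prod.ext_iff]; norm_num
  · rw [hz2 x 0, hW]; simp [wv, Prod.ext_iff]
  · rw [← he1 x 0, s x, hW]; simp only [wv, Prod.ext_iff]; norm_num
  · rw [he2 x 1, hz1 x 0, hW]; simp [wv, Prod.ext_iff]
  · rw [hz1 x 0, hW]; simp [wv, Prod.ext_iff]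
  · rw [hz1 x 1, hW]; simp [wv, Prod.ext_iff]

end Uniqueness

/-- There exist compatible pairs of two-qubit marginals `ρ_AB`, `ρ_BC`
(agreeing on `B`, and admitting a common tripartite extension) which are not compatible
with any quantum Markov chain in order A−B−C: no extension has `I(A:C|B) = 0`. Hence the
set of QMC-compatible pairs is strictly contained in the set of compatible pairs. -/
theorem compatible_pair_not_qmc_compatible :
    ∃ (ρAB : Matrix (Fin 2 × Fin 2) (Fin 2 × Fin 2) ℂ)
      (ρBC : Matrix (Fin 2 × Fin 2) (Fin 2 × Fin 2) ℂ),
      IsDensity ρAB ∧ IsDensity ρBC ∧ bptFst ρAB = bptSnd ρBC ∧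
      (∃ ρ : Matrix (Fin 2 × Fin 2 × Fin 2) (Fin 2 × Fin 2 × Fin 2) ℂ,
        IsDensity ρ ∧ ptC ρ = ρAB ∧ ptA ρ = ρBC) ∧
      ¬ (∃ ρ : Matrix (Fin 2 × Fin 2 × Fin 2) (Fin 2 × Fin 2 × Fin 2) ℂ,
        IsDensity ρ ∧ ptC ρ = ρAB ∧ ptA ρ = ρBC ∧ qcmi ρ = 0) := by
  classical
  refine ⟨mAB, mAB, mAB_density, mAB_density, ?_, ⟨Wmat, Wmat_density, ptC_Wmat, ptA_Wmat⟩, ?_⟩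
  · ext b b'
    fin_cases b <;> fin_cases b' <;>
      simp [bptFst, bptSnd, mAB, Fin.sum_univ_two, Prod.ext_iff]
  · rintro ⟨ρ, hρ, hC, hA, hq⟩
    have hρW : ρ = Wmat := ext_unique ρ hρ.1 hC hA
    subst hρW
    rw [qcmi, ptC_Wmat, ptA_Wmat, ptAC_Wmat] at hq
    rw [vnEntropy_cubic mAB_herm mAB_cubic mAB_trace mAB_sq_trace,
      vnEntropy_cubic mB_herm mB_cubic mB_trace mB_sq_trace,
      vnEntropy_proj Wmat_herm Wmat_proj] at hq
    have hL1 : Real.log (1/3) < 0 := Real.log_neg (by norm_num) (by norm_num)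
    have hL2 : Real.log (2/3) < 0 := Real.log_neg (by norm_num) (by norm_num)
    nlinarith [hq]
end

section
/- Let (X,Y,Z) be an ordering of the three factors of a tripartite space, let ρ be a density operator on the tripartite space, and let σ be an invertible density operator on the same space with Tr_Z σ = Tr_Z ρ = ρ_XY and Tr_X σ = Tr_X ρ = ρ_YZ, whose logarithm decomposes as log σ = θ_XY + θ_YZ + θ_Y for Hermitian operators θ_XY, θ_YZ, θ_Y acting on the indicated factors (extended by identities). Then S(ρ || σ) = S(σ) − S(ρ). -/
open scoped Matrix ComplexOrder

variable {A B C : Type*}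

section Aux

lemma trace_mul_matFun' {n : Type*} [Fintype n] [DecidableEq n]
    (f : ℝ → ℝ) (ρ : Matrix n n ℂ) (h : ρ.IsHermitian) :
    ((ρ * matFun f ρ).trace).re = ∑ i, h.eigenvalues i * f (h.eigenvalues i) := by
  rw [matFun, dif_pos h]
  set U := (h.eigenvectorUnitary : Matrix n n ℂ) with hUdef
  set D := Matrix.diagonal (fun i => (f (h.eigenvalues i) : ℂ)) with hD
  have key : star U * ρ * U = Matrix.diagonal (RCLike.ofReal ∘ h.eigenvalues) :=
    by
      have hs := h.spectral_theorem
      rw [Unitary.conjStarAlgAut_apply] at hs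
      conv_lhs => arg 1; arg 2; rw [hs]
      rw [← hUdef]
      simp only [← Matrix.mul_assoc, Unitary.coe_star_mul_self, Matrix.one_mul]
      rw [Matrix.mul_assoc, Unitary.coe_star_mul_self, Matrix.mul_one, Matrix.one_mul]
  have e1 : ρ * (U * D * star U) = (ρ * (U * D)) * star U := by
    simp only [Matrix.mul_assoc]
  rw [e1, Matrix.trace_mul_comm,
    show star U * (ρ * (U * D)) = (star U * ρ * U) * D by simp only [Matrix.mul_assoc],
    key, hD, Matrix.diagonal_mul_diagonal, Matrix.trace_diagonal, Complex.re_sum]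
  simp

lemma trace_mul_matLog' {n : Type*} [Fintype n] [DecidableEq n]
    (ρ : Matrix n n ℂ) (h : ρ.IsHermitian) :
    ((ρ * matLog ρ).trace).re = -vnEntropy ρ := by
  rw [matLog, trace_mul_matFun' Real.log ρ h, vnEntropy, dif_pos h, neg_neg]

variable {A B C : Type*} [Fintype A] [Fintype B] [Fintype C]
    [DecidableEq A] [DecidableEq B] [DecidableEq C]

lemma tr_extAB' (ρ : Matrix (A × B × C) (A × B × C) ℂ) (M : Matrix (A × B) (A × B) ℂ) :
    (ρ * extAB M).trace = (ptC ρ * M).trace := by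
  simp only [Matrix.trace, Matrix.diag, Matrix.mul_apply, extAB, ptC,
    Fintype.sum_prod_type, mul_ite, mul_one, mul_zero, ite_mul, one_mul, zero_mul,
    Finset.sum_ite_eq', Finset.sum_ite_eq,
    Finset.mem_univ, if_true, Finset.sum_mul, Finset.mul_sum]
  apply Finset.sum_congr rfl; intro a _
  apply Finset.sum_congr rfl; intro b _
  conv_lhs => rw [Finset.sum_comm]
  apply Finset.sum_congr rfl; intro a' _
  conv_lhs => rw [Finset.sum_comm]

lemma tr_extBC' (ρ : Matrix (A × B × C) (A × B × C) ℂ) (M : Matrix (B × C) (B × C) ℂ) :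
    (ρ * extBC M).trace = (ptA ρ * M).trace := by
  simp only [Matrix.trace, Matrix.diag, Matrix.mul_apply, extBC, ptA,
    Fintype.sum_prod_type, mul_ite, mul_one, mul_zero, ite_mul, one_mul, zero_mul,
    Finset.mem_univ, if_true, Finset.sum_mul, Finset.mul_sum]
  conv_lhs =>
    enter [2,a,2,b,2,c]
    rw [Finset.sum_comm]
    enter [2,b2]
    rw [Finset.sum_comm]
  simp only [Finset.sum_ite_eq', Finset.mem_univ, if_true]
  rw [Finset.sum_comm]
  apply Finset.sum_congr rfl; intro b _
  rw [Finset.sum_comm]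
  apply Finset.sum_congr rfl; intro c _
  rw [Finset.sum_comm]
  apply Finset.sum_congr rfl; intro b' _
  rw [Finset.sum_comm]

lemma tr_extB' (ρ : Matrix (A × B × C) (A × B × C) ℂ) (M : Matrix B B ℂ) :
    (ρ * extB M).trace = (ptAC ρ * M).trace := by
  simp only [Matrix.trace, Matrix.diag, Matrix.mul_apply, extB, ptAC,
    Fintype.sum_prod_type, mul_ite, mul_one, mul_zero, ite_mul, one_mul, zero_mul,
    Finset.mem_univ, if_true, Finset.sum_mul, Finset.mul_sum]
  conv_lhs =>
    enter [2,a,2,b,2,c]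
    rw [Finset.sum_comm]
  simp only [Finset.sum_ite_eq', Finset.mem_univ, if_true]
  rw [Finset.sum_comm]
  apply Finset.sum_congr rfl; intro b _
  conv_lhs => enter [2,a]; rw [Finset.sum_comm]
  rw [Finset.sum_comm]

end Aux

/-- For an ordering `(X,Y,Z)` of the three factors (here the factor types
are arbitrary, so every ordering is covered), if `σ` is an invertible density operator sharing
with `ρ` the marginals `ρ_XY = Tr_Z` and `ρ_YZ = Tr_X`, and `log σ = θ_XY + θ_YZ + θ_Y` for
Hermitian operators on the indicated factors, then `S(ρ‖σ) = S(σ) − S(ρ)`. -/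
theorem relEntropy_eq_entropy_diff {X Y Z : Type*} [Fintype X] [Fintype Y] [Fintype Z]
    [DecidableEq X] [DecidableEq Y] [DecidableEq Z]
    (ρ σ : Matrix (X × Y × Z) (X × Y × Z) ℂ)
    (hρ : IsDensity ρ) (hσ : IsDensity σ) (hσinv : IsUnit σ)
    (hmXY : ptC σ = ptC ρ) (hmYZ : ptA σ = ptA ρ)
    (θXY : Matrix (X × Y) (X × Y) ℂ) (θYZ : Matrix (Y × Z) (Y × Z) ℂ) (θY : Matrix Y Y ℂ)
    (hθXY : θXY.IsHermitian) (hθYZ : θYZ.IsHermitian) (hθY : θY.IsHermitian)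
    (hlog : matLog σ = extAB θXY + extBC θYZ + extB θY) :
    relEntropy ρ σ = vnEntropy σ - vnEntropy ρ := by
  have hρH : ρ.IsHermitian := hρ.1.1
  have hσH : σ.IsHermitian := hσ.1.1
  have hAC : ptAC σ = ptAC ρ := by
    funext b b'
    have h2 : ∀ (M : Matrix (X × Y × Z) (X × Y × Z) ℂ),
        ptAC M b b' = ∑ a, ptC M (a, b) (a, b') := by
      intro M
      rfl
    rw [h2, h2, hmXY]
  have h1 : (ρ * matLog σ).trace = (σ * matLog σ).trace := by
    rw [hlog]
    simp only [Matrix.mul_add, Matrix.trace_add]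
    rw [tr_extAB', tr_extAB', tr_extBC', tr_extBC', tr_extB', tr_extB', hmXY, hmYZ, hAC]
  rw [relEntropy, Matrix.mul_sub, Matrix.trace_sub, Complex.sub_re, h1,
    trace_mul_matLog' ρ hρH, trace_mul_matLog' σ hσH]
  ring
end
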